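/- Let P be a polytope in R^D all of whose ℓ-dimensional faces F satisfy dim(π(F)) = ℓ, where π: R^D → R^m is the projection onto the first m coordinates and ℓ ≤ m ≤ D. Then for any (ℓ−1)-dimensional face F_0 of π(P), the preimage slice π^{-1}(F_0) ∩ P is an (ℓ−1)-dimensional face of P. -/

import Mathlib

open Module Finset
set_option linter.unusedSectionVars false
variable {E : Type*} [NormedAddCommGroup E] [NormedSpace ℝ E] [FiniteDimensional ℝ E]

noncomputable def amax (t : Finset E) (h : E →ₗ[ℝ] ℝ) : Finset E :=
  t.filter (fun v => ∀ w ∈ t, h w ≤ h v)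

lemma amax_subset (t : Finset E) (h : E →ₗ[ℝ] ℝ) : amax t h ⊆ t := Finset.filter_subset _ _

lemma mem_amax {t : Finset E} {h : E →ₗ[ℝ] ℝ} {v : E} :
    v ∈ amax t h ↔ v ∈ t ∧ ∀ w ∈ t, h w ≤ h v := Finset.mem_filter

lemma amax_nonempty {t : Finset E} (ht : t.Nonempty) (h : E →ₗ[ℝ] ℝ) : (amax t h).Nonempty := by
  obtain ⟨v, hv, hmax⟩ := Finset.exists_max_image t h ht
  exact ⟨v, mem_amax.2 ⟨hv, hmax⟩⟩

lemma amax_eq_on {t : Finset E} {h : E →ₗ[ℝ] ℝ} {v v' : E}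
    (hv : v ∈ amax t h) (hv' : v' ∈ amax t h) : h v = h v' :=
  le_antisymm ((mem_amax.1 hv').2 v (mem_amax.1 hv).1) ((mem_amax.1 hv).2 v' (mem_amax.1 hv').1)

lemma lt_of_not_amax {t : Finset E} {h : E →ₗ[ℝ] ℝ} {v w : E}
    (hv : v ∈ amax t h) (hw : w ∈ t) (hw' : w ∉ amax t h) : h w < h v := by
  rw [mem_amax, not_and] at hw'
  push_neg at hw'
  obtain ⟨u, hu, hlt⟩ := hw' hw
  exact hlt.trans_le ((mem_amax.1 hv).2 u hu)

/-- hull of set with h-value constantly that of v₀ has h-value h v₀ -/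
lemma h_eq_on_hull {t : Finset E} {h : E →ₗ[ℝ] ℝ} {c : ℝ} (hc : ∀ v ∈ t, h v = c)
    {x : E} (hx : x ∈ convexHull ℝ (t : Set E)) : h x = c := by
  have h1 : convexHull ℝ (t : Set E) ⊆ {w | h w ≤ c} :=
    convexHull_min (fun v hv => (hc v hv).le) (convex_halfSpace_le h.isLinear c)
  have h2 : convexHull ℝ (t : Set E) ⊆ {w | c ≤ h w} :=
    convexHull_min (fun v hv => (hc v hv).ge) (convex_halfSpace_ge h.isLinear c)
  exact le_antisymm (h1 hx) (h2 hx)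

lemma h_le_on_hull {t : Finset E} {h : E →ₗ[ℝ] ℝ} {c : ℝ} (hc : ∀ v ∈ t, h v ≤ c)
    {x : E} (hx : x ∈ convexHull ℝ (t : Set E)) : h x ≤ c :=
  convexHull_min (s := (t : Set E)) hc (convex_halfSpace_le h.isLinear c) hx

/-- Lemma A: the exposed face of a polytope is the hull of the argmax vertices. -/
lemma face_hull (t : Finset E) (h : E →ₗ[ℝ] ℝ) :
    {x ∈ convexHull ℝ (t : Set E) | ∀ y ∈ convexHull ℝ (t : Set E), h y ≤ h x}
      = convexHull ℝ ((amax t h : Finset E) : Set E) := by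
  rcases t.eq_empty_or_nonempty with rfl | htne
  · simp [amax]
  obtain ⟨v₀, hv₀⟩ := amax_nonempty htne h
  have hv₀t : v₀ ∈ t := amax_subset t h hv₀
  ext x
  constructor
  · rintro ⟨hxP, hxmax⟩
    -- h x = h v₀
    have hle : ∀ y ∈ t, h y ≤ h x := fun y hy =>
      hxmax y (subset_convexHull ℝ (t : Set E) hy)
    have hxle : h x ≤ h v₀ := h_le_on_hull (fun v hv => (mem_amax.1 hv₀).2 v hv) hxP
    have hxeq : h x = h v₀ := le_antisymm hxle (hle v₀ hv₀t)
    rw [Finset.convexHull_eq] at hxP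
    obtain ⟨w, hw0, hw1, hwx⟩ := hxP
    -- weights vanish outside amax
    have hsupp : ∀ y ∈ t, y ∉ amax t h → w y = 0 := by
      intro y hy hyn
      by_contra hwy
      have hwy' : 0 < w y := lt_of_le_of_ne (hw0 y hy) (Ne.symm hwy)
      have hylt : h y < h v₀ := lt_of_not_amax hv₀ hy hyn
      have hsum : h x = ∑ y ∈ t, w y * h y := by
        rw [← hwx, Finset.centerMass_eq_of_sum_1 _ _ hw1, map_sum]
        simp [mul_comm]
      have hlt : ∑ y ∈ t, w y * h y < ∑ y ∈ t, w y * h v₀ := by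
        apply Finset.sum_lt_sum
        · intro i hi
          exact mul_le_mul_of_nonneg_left ((hle i hi).trans_eq hxeq) (hw0 i hi)
        · exact ⟨y, hy, by nlinarith⟩
      have hone : ∑ y ∈ t, w y * h v₀ = h v₀ := by rw [← Finset.sum_mul, hw1, one_mul]
      rw [hone, ← hsum] at hlt
      exact absurd hxeq (ne_of_lt hlt)
    -- x is center of mass of amax vertices
    have hsum' : ∑ y ∈ amax t h, w y = 1 := by
      rw [← hw1]
      exact Finset.sum_subset (amax_subset t h) hsupp
    have hcm : (amax t h).centerMass w id = t.centerMass w id :=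
      Finset.centerMass_subset id (amax_subset t h) hsupp
    rw [← hwx, ← hcm]
    exact Finset.centerMass_id_mem_convexHull _ (fun i hi => hw0 i (amax_subset t h hi))
      (by rw [hsum']; norm_num)
  · intro hx
    have hxt : x ∈ convexHull ℝ (t : Set E) :=
      convexHull_mono (by exact_mod_cast amax_subset t h) hx
    have hxeq : h x = h v₀ := h_eq_on_hull (fun v hv => amax_eq_on hv hv₀) hx
    refine ⟨hxt, fun y hy => ?_⟩
    rw [hxeq]
    exact h_le_on_hull (fun v hv => (mem_amax.1 hv₀).2 v hv) hy

lemma vectorSpan_hull (s : Set E) : vectorSpan ℝ (convexHull ℝ s) = vectorSpan ℝ s := by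
  rw [← direction_affineSpan, affineSpan_convexHull, direction_affineSpan]

lemma vanishes_of_const {t : Finset E} {ψ : E →ₗ[ℝ] ℝ} (hc : ∀ v ∈ t, ∀ v' ∈ t, ψ v = ψ v') :
    ∀ u ∈ vectorSpan ℝ (t : Set E), ψ u = 0 := by
  intro u hu
  have : vectorSpan ℝ (t : Set E) ≤ LinearMap.ker ψ := by
    rw [vectorSpan_def]
    apply Submodule.span_le.2
    rintro v ⟨a, ha, b, hb, rfl⟩
    simp only [SetLike.mem_coe, LinearMap.mem_ker, vsub_eq_sub, map_sub]
    rw [hc a ha b hb, sub_self]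
  exact this hu

lemma const_on_amax {t : Finset E} {h g : E →ₗ[ℝ] ℝ}
    (hg : ∀ u ∈ vectorSpan ℝ ((amax t h : Finset E) : Set E), g u = 0)
    {v v' : E} (hv : v ∈ amax t h) (hv' : v' ∈ amax t h) : g v = g v' := by
  have : g (v - v') = 0 := hg _ (vsub_mem_vectorSpan ℝ (Finset.mem_coe.2 hv) (Finset.mem_coe.2 hv'))
  rw [map_sub] at this; linarith

/-- A proper exposed face has strictly smaller dimension. -/
lemma dim_lt_of_proper {t : Finset E} {h : E →ₗ[ℝ] ℝ} (hne : (amax t h).Nonempty)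
    (hprop : amax t h ≠ t) :
    finrank ℝ (vectorSpan ℝ ((amax t h : Finset E) : Set E)) < finrank ℝ (vectorSpan ℝ (t : Set E)) := by
  obtain ⟨v₀, hv₀⟩ := hne
  obtain ⟨w₀, hw₀t, hw₀n⟩ := Finset.exists_of_ssubset (lt_of_le_of_ne (amax_subset t h) hprop)
  apply Submodule.finrank_lt_finrank_of_lt
  apply lt_of_le_of_ne (vectorSpan_mono ℝ (by exact_mod_cast amax_subset t h))
  intro heq
  have hmem : w₀ - v₀ ∈ vectorSpan ℝ ((amax t h : Finset E) : Set E) := by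
    rw [heq]
    exact vsub_mem_vectorSpan ℝ (Finset.mem_coe.2 hw₀t) (Finset.mem_coe.2 (amax_subset t h hv₀))
  have hzero : h (w₀ - v₀) = 0 := by
    have : vectorSpan ℝ ((amax t h : Finset E) : Set E) ≤ LinearMap.ker h := by
      rw [vectorSpan_def]
      apply Submodule.span_le.2
      rintro v ⟨a, ha, b, hb, rfl⟩
      simp only [SetLike.mem_coe, LinearMap.mem_ker, vsub_eq_sub, map_sub]
      rw [amax_eq_on (Finset.mem_coe.1 ha) (Finset.mem_coe.1 hb), sub_self]
    simpa using this hmem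
  have hlt : h w₀ < h v₀ := lt_of_not_amax hv₀ hw₀t hw₀n
  rw [map_sub] at hzero
  linarith

/-- separating functional vanishing on a subspace -/
lemma exists_fn (W : Submodule ℝ E) {u : E} (hu : u ∉ W) :
    ∃ f : E →ₗ[ℝ] ℝ, (∀ w ∈ W, f w = 0) ∧ f u = 1 := by
  obtain ⟨f, hfu, hfW⟩ := W.exists_dual_map_eq_bot_of_notMem hu inferInstance
  refine ⟨(f u)⁻¹ • f, fun w hw => ?_, by simp [inv_mul_cancel₀ hfu]⟩
  have : f w = 0 := by
    have : f w ∈ W.map f := Submodule.mem_map_of_mem hw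
    rwa [hfW, Submodule.mem_bot] at this
  simp [this]

/-- Rotation step: given a functional `g` constant on the face, either we can enlarge the
face, or `g` is bounded by its face value, or some positive perturbation is degenerate. -/
lemma try_g (t : Finset E) (h g : E →ₗ[ℝ] ℝ) (x₀ : E) (hx₀ : x₀ ∈ amax t h)
    (hg : ∀ v ∈ amax t h, g v = g x₀) :
    (∃ h', amax t h ⊂ amax t h' ∧ amax t h' ≠ t) ∨
    (∀ w ∈ t, g w ≤ g x₀) ∨
    (∃ s : ℝ, 0 < s ∧ ∀ v ∈ t, ∀ v' ∈ t, (h + s • g) v = (h + s • g) v') := by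
  classical
  set T := t.filter (fun w => g x₀ < g w) with hT
  rcases T.eq_empty_or_nonempty with hTe | hTne
  · right; left
    intro w hw
    by_contra hlt
    exact Finset.notMem_empty w (hTe ▸ Finset.mem_filter.2 ⟨hw, not_le.1 hlt⟩)
  · -- minimize the ratio
    have hTprop : ∀ w ∈ T, w ∈ t ∧ g x₀ < g w := fun w hw => Finset.mem_filter.1 hw
    have hTnotmax : ∀ w ∈ T, h w < h x₀ := by
      intro w hw
      refine lt_of_not_amax hx₀ (hTprop w hw).1 (fun hmem => ?_)
      exact absurd (hg w hmem) (ne_of_gt (hTprop w hw).2)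
    obtain ⟨w₁, hw₁T, hw₁min⟩ := Finset.exists_min_image T
      (fun w => (h x₀ - h w) / (g w - g x₀)) hTne
    set s := (h x₀ - h w₁) / (g w₁ - g x₀) with hs
    have hden : ∀ w ∈ T, 0 < g w - g x₀ := fun w hw => sub_pos.2 (hTprop w hw).2
    have hspos : 0 < s := div_pos (sub_pos.2 (hTnotmax w₁ hw₁T)) (hden w₁ hw₁T)
    set φ := h + s • g with hφ
    have hφval : ∀ y : E, φ y = h y + s * g y := fun y => rfl
    have hc : ∀ w ∈ t, φ w ≤ φ x₀ := by
      intro w hw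
      rcases le_or_gt (g w) (g x₀) with hgle | hggt
      · have : h w ≤ h x₀ := (mem_amax.1 hx₀).2 w hw
        rw [hφval, hφval]
        nlinarith
      · have hwT : w ∈ T := Finset.mem_filter.2 ⟨hw, hggt⟩
        have : s ≤ (h x₀ - h w) / (g w - g x₀) := hw₁min w hwT
        rw [le_div_iff₀ (hden w hwT)] at this
        rw [hφval, hφval]
        nlinarith
    have hw₁eq : φ w₁ = φ x₀ := by
      have : s * (g w₁ - g x₀) = h x₀ - h w₁ := by
        rw [hs, div_mul_cancel₀ _ (ne_of_gt (hden w₁ hw₁T))]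
      rw [hφval, hφval]; nlinarith
    have hsub : amax t h ⊆ amax t φ := by
      intro v hv
      have hveq : φ v = φ x₀ := by
        rw [hφval, hφval, amax_eq_on hv hx₀, hg v hv]
      exact mem_amax.2 ⟨amax_subset t h hv, fun w hw => by rw [hveq]; exact hc w hw⟩
    have hw₁mem : w₁ ∈ amax t φ :=
      mem_amax.2 ⟨(hTprop w₁ hw₁T).1, fun w hw => by rw [hw₁eq]; exact hc w hw⟩
    have hw₁nmem : w₁ ∉ amax t h := by
      intro hmem
      exact absurd (hg w₁ hmem) (ne_of_gt (hTprop w₁ hw₁T).2)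
    by_cases hdeg : amax t φ = t
    · right; right
      refine ⟨s, hspos, fun v hv v' hv' => ?_⟩
      have hv1 : v ∈ amax t φ := hdeg.symm ▸ hv
      have hv2 : v' ∈ amax t φ := hdeg.symm ▸ hv'
      exact amax_eq_on hv1 hv2
    · left
      exact ⟨φ, Finset.ssubset_iff_of_subset hsub |>.2 ⟨w₁, hw₁mem, hw₁nmem⟩, hdeg⟩

/-- A proper face of codimension ≥ 2 can be enlarged to a bigger proper face. -/
lemma aug (t : Finset E) (h : E →ₗ[ℝ] ℝ) (hne : (amax t h).Nonempty) (hprop : amax t h ≠ t)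
    (hdim : finrank ℝ (vectorSpan ℝ ((amax t h : Finset E) : Set E)) + 2
      ≤ finrank ℝ (vectorSpan ℝ (t : Set E))) :
    ∃ h', amax t h ⊂ amax t h' ∧ amax t h' ≠ t := by
  classical
  obtain ⟨x₀, hx₀⟩ := hne
  set A := vectorSpan ℝ ((amax t h : Finset E) : Set E) with hA
  set V := vectorSpan ℝ (t : Set E) with hV
  have hAV : A ≤ V := vectorSpan_mono ℝ (by exact_mod_cast amax_subset t h)
  -- find u₁ ∈ V \ A
  have hAltV : A < V := lt_of_le_of_ne hAV (fun heq => by rw [heq] at hdim; omega)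
  obtain ⟨u₁, hu₁V, hu₁A⟩ := SetLike.exists_of_lt hAltV
  have hu₁ne : u₁ ≠ 0 := fun h0 => hu₁A (h0 ▸ A.zero_mem)
  set A₁ := A ⊔ (ℝ ∙ u₁) with hA₁
  have hA₁V : A₁ ≤ V := sup_le hAV ((Submodule.span_singleton_le_iff_mem u₁ V).2 hu₁V)
  have hA₁dim : finrank ℝ A₁ < finrank ℝ V := by
    calc finrank ℝ A₁ ≤ finrank ℝ A + finrank ℝ (ℝ ∙ u₁) :=
          Submodule.finrank_add_le_finrank_add_finrank A (ℝ ∙ u₁)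
      _ = finrank ℝ A + 1 := by rw [finrank_span_singleton hu₁ne]
      _ < finrank ℝ V := by omega
  obtain ⟨u₂, hu₂V, hu₂A₁⟩ := SetLike.exists_of_lt (lt_of_le_of_ne hA₁V
    (fun heq => absurd (heq ▸ rfl) (ne_of_lt hA₁dim)))
  set A₂ := A ⊔ (ℝ ∙ u₂) with hA₂
  have hu₂A : u₂ ∉ A := fun hm => hu₂A₁ (le_sup_left (α := Submodule ℝ E) hm)
  have hu₁A₂ : u₁ ∉ A₂ := by
    intro hm
    rw [hA₂, Submodule.mem_sup] at hm
    obtain ⟨a, ha, b, hb, hab⟩ := hm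
    rw [Submodule.mem_span_singleton] at hb
    obtain ⟨c, rfl⟩ := hb
    rcases eq_or_ne c 0 with rfl | hc
    · rw [zero_smul, add_zero] at hab; exact hu₁A (hab ▸ ha)
    · apply hu₂A₁
      have : u₂ = c⁻¹ • (u₁ - a) := by
        rw [← hab]; rw [add_sub_cancel_left, smul_smul, inv_mul_cancel₀ hc, one_smul]
      rw [this, hA₁]
      apply Submodule.smul_mem
      exact Submodule.sub_mem _ (le_sup_right (α := Submodule ℝ E)
        ((Submodule.mem_span_singleton_self u₁))) (le_sup_left (α := Submodule ℝ E) ha)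
  obtain ⟨g₁, hg₁0, hg₁u₁⟩ := exists_fn A₂ hu₁A₂
  obtain ⟨g₂, hg₂0, hg₂u₂⟩ := exists_fn A₁ hu₂A₁
  have hg₁A : ∀ u ∈ A, g₁ u = 0 := fun u hu => hg₁0 u (le_sup_left (α := Submodule ℝ E) hu)
  have hg₂A : ∀ u ∈ A, g₂ u = 0 := fun u hu => hg₂0 u (le_sup_left (α := Submodule ℝ E) hu)
  have hg₂u₁ : g₂ u₁ = 0 := hg₂0 u₁ (le_sup_right (α := Submodule ℝ E)
    (Submodule.mem_span_singleton_self u₁))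
  -- each of ±g₁, ±g₂ is constant on the face
  have hconst : ∀ g : E →ₗ[ℝ] ℝ, (∀ u ∈ A, g u = 0) → ∀ v ∈ amax t h, g v = g x₀ :=
    fun g hg v hv => const_on_amax (hA ▸ hg) hv hx₀
  -- run try_g on the four candidates
  rcases try_g t h g₁ x₀ hx₀ (hconst g₁ hg₁A) with hok | hrest₁
  · exact hok
  rcases try_g t h (-g₁) x₀ hx₀ (hconst (-g₁) (fun u hu => by simp [hg₁A u hu])) with hok | hrest₁'
  · exact hok
  rcases try_g t h g₂ x₀ hx₀ (hconst g₂ hg₂A) with hok | hrest₂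
  · exact hok
  rcases try_g t h (-g₂) x₀ hx₀ (hconst (-g₂) (fun u hu => by simp [hg₂A u hu])) with hok | hrest₂'
  · exact hok
  exfalso
  -- extract: for i = 1,2 there is ε ≠ 0 with (h + ε • gᵢ) vanishing on V
  have extract : ∀ g : E →ₗ[ℝ] ℝ, (∃ u ∈ V, g u ≠ 0) →
      ((∀ w ∈ t, g w ≤ g x₀) ∨ (∃ s : ℝ, 0 < s ∧ ∀ v ∈ t, ∀ v' ∈ t, (h + s • g) v = (h + s • g) v')) →
      ((∀ w ∈ t, (-g) w ≤ (-g) x₀) ∨ (∃ s : ℝ, 0 < s ∧ ∀ v ∈ t, ∀ v' ∈ t, (h + s • (-g)) v = (h + s • (-g)) v')) →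
      ∃ ε : ℝ, ε ≠ 0 ∧ ∀ u ∈ V, h u + ε * g u = 0 := by
    intro g hgV h1 h2
    have hnotboth : ¬ ((∀ w ∈ t, g w ≤ g x₀) ∧ (∀ w ∈ t, (-g) w ≤ (-g) x₀)) := by
      rintro ⟨hle, hge⟩
      have hcst : ∀ v ∈ t, ∀ v' ∈ t, g v = g v' := by
        intro v hv v' hv'
        have h1 := hle v hv
        have h2 := hge v hv
        have h3 := hle v' hv'
        have h4 := hge v' hv'
        simp only [LinearMap.neg_apply, neg_le_neg_iff] at h2 h4
        linarith
      obtain ⟨u, huV, hgu⟩ := hgV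
      exact hgu (vanishes_of_const hcst u (hV ▸ huV))
    rcases h1 with hle1 | ⟨s, hs, hdeg⟩
    · rcases h2 with hle2 | ⟨s, hs, hdeg⟩
      · exact absurd ⟨hle1, hle2⟩ hnotboth
      · refine ⟨-s, neg_ne_zero.2 (ne_of_gt hs), ?_⟩
        intro u hu
        have := vanishes_of_const hdeg u (hV ▸ hu)
        simp only [LinearMap.add_apply, LinearMap.smul_apply, LinearMap.neg_apply,
          smul_eq_mul] at this
        linarith
    · refine ⟨s, ne_of_gt hs, ?_⟩
      intro u hu
      have := vanishes_of_const hdeg u (hV ▸ hu)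
      simpa using this
  have hg₁V : ∃ u ∈ V, g₁ u ≠ 0 := ⟨u₁, hu₁V, by rw [hg₁u₁]; norm_num⟩
  have hg₂V : ∃ u ∈ V, g₂ u ≠ 0 := ⟨u₂, hu₂V, by rw [hg₂u₂]; norm_num⟩
  obtain ⟨ε₁, hε₁, hvan₁⟩ := extract g₁ hg₁V hrest₁ hrest₁'
  obtain ⟨ε₂, hε₂, hvan₂⟩ := extract g₂ hg₂V hrest₂ hrest₂'
  have e1 := hvan₁ u₁ hu₁V
  have e2 := hvan₂ u₁ hu₁V
  rw [hg₁u₁] at e1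
  rw [hg₂u₁] at e2
  apply hε₁
  linarith

/-- if the polytope has positive dimension there is a proper exposed face -/
lemma exists_proper (t : Finset E) (hrank : 1 ≤ finrank ℝ (vectorSpan ℝ (t : Set E))) :
    ∃ h : E →ₗ[ℝ] ℝ, (amax t h).Nonempty ∧ amax t h ≠ t := by
  classical
  -- two distinct points
  have htwo : ∃ a ∈ t, ∃ b ∈ t, a ≠ b := by
    by_contra hone
    push_neg at hone
    have hsub : (t : Set E).Subsingleton := fun a ha b hb => hone a ha b hb
    have : vectorSpan ℝ (t : Set E) = ⊥ := by
      rcases Set.Subsingleton.eq_empty_or_singleton hsub with he | ⟨x, hx⟩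
      · rw [he, vectorSpan_empty]
      · rw [hx, vectorSpan_singleton]
    rw [this, finrank_bot] at hrank
    omega
  obtain ⟨a, ha, b, hb, hab⟩ := htwo
  have : ¬ ∀ φ : Module.Dual ℝ E, φ (a - b) = 0 := by
    rw [Module.forall_dual_apply_eq_zero_iff]
    exact sub_ne_zero.2 hab
  push_neg at this
  obtain ⟨φ, hφ⟩ := this
  rw [map_sub] at hφ
  have hane : φ a ≠ φ b := fun h => hφ (by rw [h, sub_self])
  rcases lt_or_gt_of_ne hane with hlt | hgt
  · refine ⟨φ, amax_nonempty ⟨a, ha⟩ φ, fun heq => ?_⟩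
    have := (mem_amax.1 (heq.symm ▸ ha : a ∈ amax t φ)).2 b hb
    linarith
  · refine ⟨φ, amax_nonempty ⟨a, ha⟩ φ, fun heq => ?_⟩
    have := (mem_amax.1 (heq.symm ▸ hb : b ∈ amax t φ)).2 a ha
    linarith

/-- facet existence: from any proper exposed face we can get one of codimension one -/
lemma exists_facet_aux (t : Finset E) :
    ∀ n (h0 : E →ₗ[ℝ] ℝ), (amax t h0).Nonempty → amax t h0 ≠ t → t.card - (amax t h0).card ≤ n →
    ∃ h : E →ₗ[ℝ] ℝ, (amax t h).Nonempty ∧ amax t h ≠ t ∧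
      finrank ℝ (vectorSpan ℝ ((amax t h : Finset E) : Set E)) + 1
        = finrank ℝ (vectorSpan ℝ (t : Set E)) := by
  intro n
  induction n with
  | zero => intro h0 hne hprop hcard
            exfalso
            have h1 : (amax t h0).card < t.card :=
              Finset.card_lt_card (lt_of_le_of_ne (amax_subset t h0) hprop)
            omega
  | succ n ih =>
    intro h0 hne hprop hcard
    have hlt := dim_lt_of_proper hne hprop
    rcases eq_or_lt_of_le (Nat.succ_le_of_lt hlt) with heq | hlt2
    · exact ⟨h0, hne, hprop, heq⟩
    · have hdim : finrank ℝ (vectorSpan ℝ ((amax t h0 : Finset E) : Set E)) + 2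
          ≤ finrank ℝ (vectorSpan ℝ (t : Set E)) := hlt2
      obtain ⟨h', hss, hprop'⟩ := aug t h0 hne hprop hdim
      have hne' : (amax t h').Nonempty := hne.mono hss.subset
      have hcard' : t.card - (amax t h').card ≤ n := by
        have h1 : (amax t h0).card < (amax t h').card := Finset.card_lt_card hss
        have h2 : (amax t h').card ≤ t.card := Finset.card_le_card (amax_subset t h')
        omega
      exact ih h' hne' hprop' hcard'

/-- composing exposed faces: a face of a face is a face -/
lemma compose (s : Finset E) (h g : E →ₗ[ℝ] ℝ) :
    ∃ φ : E →ₗ[ℝ] ℝ, amax s φ = amax (amax s h) g := by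
  classical
  set t := amax s h with ht
  rcases (s \ t).eq_empty_or_nonempty with hse | hsne
  · have hts : t = s := Finset.Subset.antisymm (amax_subset s h)
      (Finset.sdiff_eq_empty_iff_subset.1 hse)
    exact ⟨g, by rw [hts]⟩
  · have hsne' : s.Nonempty := hsne.mono (Finset.sdiff_subset)
    have htne : t.Nonempty := amax_nonempty hsne' h
    obtain ⟨x₀, hx₀⟩ := htne
    -- the gap δ
    obtain ⟨w₀, hw₀, hδmin⟩ := Finset.exists_min_image (s \ t) (fun w => h x₀ - h w) hsne
    set δ := h x₀ - h w₀ with hδ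
    have hδpos : 0 < δ := by
      have := lt_of_not_amax hx₀ (Finset.mem_sdiff.1 hw₀).1 (Finset.mem_sdiff.1 hw₀).2
      linarith
    -- bound M on |g|
    obtain ⟨wM, hwM, hMmax⟩ := Finset.exists_max_image s (fun w => |g w|) hsne'
    set M := |g wM| with hM
    have hM0 : 0 ≤ M := abs_nonneg _
    -- the max of g on t
    obtain ⟨v₁, hv₁⟩ := amax_nonempty ⟨x₀, hx₀⟩ g
    set b := g v₁ with hb
    have hbM : -M ≤ b := by
      have := hMmax v₁ (amax_subset s h (amax_subset t g hv₁))
      rw [hb]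
      cases abs_cases (g v₁) with
      | inl hc => linarith [hc.1]
      | inr hc => linarith [hc.1]
    set ε := δ / (2 * M + 1) with hε
    have hεpos : 0 < ε := div_pos hδpos (by linarith)
    set φ := h + ε • g with hφ
    have hφval : ∀ y : E, φ y = h y + ε * g y := fun y => rfl
    have hc : h x₀ = h v₁ := amax_eq_on hx₀ (amax_subset t g hv₁)
    -- strict bound for vertices outside t
    have houter : ∀ w ∈ s \ t, φ w < h x₀ + ε * b := by
      intro w hw
      have h1 : h w ≤ h x₀ - δ := by have := hδmin w hw; linarith
      have h2 : g w ≤ M := by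
        have := hMmax w (Finset.mem_sdiff.1 hw).1
        cases abs_cases (g w) with
        | inl hc => linarith [hc.1]
        | inr hc => linarith [hc.1]
      have h3 : ε * (M - b) < δ := by
        have hle : ε * (M - b) ≤ ε * (2 * M) := by
          apply mul_le_mul_of_nonneg_left _ (le_of_lt hεpos)
          linarith
        have : ε * (2 * M) < δ := by
          rw [hε, div_mul_eq_mul_div, div_lt_iff₀ (by linarith : (0:ℝ) < 2 * M + 1)]
          nlinarith
        linarith
      rw [hφval]
      nlinarith
    -- vertices in t get value h x₀ + ε g v
    have hinner : ∀ v ∈ t, φ v = h x₀ + ε * g v := by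
      intro v hv
      rw [hφval, amax_eq_on hv hx₀]
    have hmaxval : ∀ w ∈ s, φ w ≤ h x₀ + ε * b := by
      intro w hw
      by_cases hwt : w ∈ t
      · rw [hinner w hwt]
        have : g w ≤ b := (mem_amax.1 hv₁).2 w hwt
        nlinarith
      · exact le_of_lt (houter w (Finset.mem_sdiff.2 ⟨hw, hwt⟩))
    refine ⟨φ, ?_⟩
    ext v
    constructor
    · intro hv
      obtain ⟨hvs, hvmax⟩ := mem_amax.1 hv
      have hv₁val : φ v₁ = h x₀ + ε * b := hinner v₁ (amax_subset t g hv₁)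
      have hge : h x₀ + ε * b ≤ φ v := hv₁val ▸ hvmax v₁ (amax_subset s h (amax_subset t g hv₁))
      have hvt : v ∈ t := by
        by_contra hvt
        exact absurd hge (not_le.2 (houter v (Finset.mem_sdiff.2 ⟨hvs, hvt⟩)))
      have : g v = b := by
        have h1 := hinner v hvt
        have h2 := hmaxval v hvs
        have : φ v = h x₀ + ε * b := le_antisymm h2 hge
        rw [h1] at this
        have := mul_left_cancel₀ (ne_of_gt hεpos) (by linarith : ε * g v = ε * b)
        exact this
      exact mem_amax.2 ⟨hvt, fun w hw => by rw [this]; exact (mem_amax.1 hv₁).2 w hw⟩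
    · intro hv
      have hvt : v ∈ t := amax_subset t g hv
      have hgvb : g v = b := amax_eq_on hv hv₁
      refine mem_amax.2 ⟨amax_subset s h hvt, fun w hw => ?_⟩
      rw [hinner v hvt, hgvb]
      exact hmaxval w hw

/-- chain down to an exposed face of exact dimension k -/
lemma chain (s : Finset E) (k : ℕ) :
    ∀ n (h : E →ₗ[ℝ] ℝ), (amax s h).Nonempty →
    k ≤ finrank ℝ (vectorSpan ℝ ((amax s h : Finset E) : Set E)) → (amax s h).card ≤ n →
    ∃ h' : E →ₗ[ℝ] ℝ, (amax s h').Nonempty ∧ amax s h' ⊆ amax s h ∧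
      finrank ℝ (vectorSpan ℝ ((amax s h' : Finset E) : Set E)) = k := by
  intro n
  induction n with
  | zero =>
    intro h hne hk hcard
    have := Finset.card_pos.2 hne
    omega
  | succ n ih =>
    intro h hne hk hcard
    set t := amax s h with ht
    rcases eq_or_lt_of_le hk with heq | hlt
    · exact ⟨h, hne, Finset.Subset.refl _, heq.symm⟩
    · -- need a facet of t
      have hrank1 : 1 ≤ finrank ℝ (vectorSpan ℝ (t : Set E)) := by omega
      obtain ⟨g0, hg0ne, hg0prop⟩ := exists_proper t hrank1
      obtain ⟨g, hgne, hgprop, hgdim⟩ := exists_facet_aux t t.card g0 hg0ne hg0prop (by omega)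
      obtain ⟨φ, hφ⟩ := compose s h g
      rw [← ht] at hφ
      have hφne : (amax s φ).Nonempty := by rw [hφ]; exact hgne
      have hφsub : amax s φ ⊆ t := by rw [hφ]; exact amax_subset t g
      have hφk : k ≤ finrank ℝ (vectorSpan ℝ ((amax s φ : Finset E) : Set E)) := by
        rw [hφ]; omega
      have hφcard : (amax s φ).card ≤ n := by
        have h1 : (amax s φ).card < t.card := Finset.card_lt_card
          (lt_of_le_of_ne hφsub (by rw [hφ]; exact hgprop))
        omega
      obtain ⟨h', hne', hsub', hdim'⟩ := ih φ hφne hφk hφcard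
      exact ⟨h', hne', hsub'.trans hφsub, hdim'⟩

lemma isExposed_hull_amax (t : Finset E) (h : E →ₗ[ℝ] ℝ) :
    IsExposed ℝ (convexHull ℝ (t : Set E)) (convexHull ℝ ((amax t h : Finset E) : Set E)) :=
  fun _ => ⟨LinearMap.toContinuousLinearMap h, (face_hull t h).symm⟩

lemma vectorSpan_image {F : Type*} [NormedAddCommGroup F] [NormedSpace ℝ F]
    (f : E →ₗ[ℝ] F) (S : Set E) :
    vectorSpan ℝ (f '' S) = (vectorSpan ℝ S).map f := by
  rw [vectorSpan_def, vectorSpan_def, ← Submodule.span_image]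
  congr 1
  ext v
  simp only [Set.mem_vsub, Set.mem_image, vsub_eq_sub]
  constructor
  · rintro ⟨_, ⟨a, ha, rfl⟩, _, ⟨b, hb, rfl⟩, rfl⟩
    exact ⟨a - b, ⟨a, ha, b, hb, rfl⟩, map_sub f a b⟩
  · rintro ⟨_, ⟨a, ha, b, hb, rfl⟩, rfl⟩
    exact ⟨f a, ⟨a, ha, rfl⟩, f b, ⟨b, hb, rfl⟩, (map_sub f a b).symm⟩





/-- If `P ⊆ ℝ^D` is a polytope all of whose `ℓ`-dimensional faces `F` satisfy
`dim π(F) = ℓ` (where `π : ℝ^D → ℝ^m` projects to the first `m` coordinates,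
`0 < ℓ ≤ m ≤ D`), then for any `(ℓ-1)`-dimensional face `F₀` of `π(P)`, the slice
`π⁻¹(F₀) ∩ P` is an `(ℓ-1)`-dimensional face of `P`. -/
theorem slice_over_face_is_face (D m ℓ : ℕ) (hℓ : 0 < ℓ) (hℓm : ℓ ≤ m) (hmD : m ≤ D)
    (P : Set (Fin D → ℝ)) (hP : ∃ s : Finset (Fin D → ℝ), P = convexHull ℝ (s : Set (Fin D → ℝ)))
    (π : (Fin D → ℝ) → (Fin m → ℝ)) (hπ : π = fun x => fun i => x (Fin.castLE hmD i))
    (hfaces : ∀ F : Set (Fin D → ℝ), IsExposed ℝ P F → F.Nonempty →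
      Module.finrank ℝ (vectorSpan ℝ F) = ℓ →
      Module.finrank ℝ (vectorSpan ℝ (π '' F)) = ℓ)
    (F₀ : Set (Fin m → ℝ)) (hF₀ : IsExposed ℝ (π '' P) F₀) (hF₀ne : F₀.Nonempty)
    (hF₀dim : Module.finrank ℝ (vectorSpan ℝ F₀) = ℓ - 1) :
    IsExposed ℝ P (π ⁻¹' F₀ ∩ P) ∧
    Module.finrank ℝ (vectorSpan ℝ (π ⁻¹' F₀ ∩ P)) = ℓ - 1 := by
  obtain ⟨s, hPs⟩ := hP
  obtain ⟨l, hl⟩ := hF₀ hF₀ne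
  set πₗ : (Fin D → ℝ) →ₗ[ℝ] (Fin m → ℝ) :=
    LinearMap.pi (fun i => LinearMap.proj (Fin.castLE hmD i)) with hπₗ
  have hπeq : ∀ x, π x = πₗ x := by intro x; rw [hπ]; rfl
  set Lₗ : (Fin D → ℝ) →ₗ[ℝ] ℝ := l.toLinearMap.comp πₗ with hLₗ
  have hLval : ∀ x, Lₗ x = l (π x) := by
    intro x; rw [hLₗ]; simp [hπeq x]
  set S := π ⁻¹' F₀ ∩ P with hSdef
  have hSchar : S = {x ∈ P | ∀ y ∈ P, Lₗ y ≤ Lₗ x} := by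
    ext x
    simp only [hSdef, Set.mem_inter_iff, Set.mem_preimage, Set.mem_setOf_eq]
    constructor
    · rintro ⟨hxF, hxP⟩
      rw [hl] at hxF
      refine ⟨hxP, fun y hy => ?_⟩
      rw [hLval, hLval]
      exact hxF.2 (π y) ⟨y, hy, rfl⟩
    · rintro ⟨hxP, hmax⟩
      refine ⟨?_, hxP⟩
      rw [hl]
      refine ⟨⟨x, hxP, rfl⟩, ?_⟩
      rintro z ⟨y, hy, rfl⟩
      have := hmax y hy
      rwa [hLval, hLval] at this
  have hShull : S = convexHull ℝ ((amax s Lₗ : Finset (Fin D → ℝ)) : Set (Fin D → ℝ)) := by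
    rw [hSchar, hPs, face_hull]
  have hexp : IsExposed ℝ P S := by
    intro _
    exact ⟨LinearMap.toContinuousLinearMap Lₗ, hSchar⟩
  have hSne : S.Nonempty := by
    obtain ⟨y, hy⟩ := hF₀ne
    have hyP : y ∈ π '' P := by rw [hl] at hy; exact hy.1
    obtain ⟨x, hxP, hxy⟩ := hyP
    exact ⟨x, ⟨by rw [Set.mem_preimage, hxy]; exact hy, hxP⟩⟩
  have hπS : π '' S = F₀ := by
    apply Set.Subset.antisymm
    · rintro _ ⟨x, ⟨hxF, _⟩, rfl⟩; exact hxF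
    · intro y hy
      have hyP : y ∈ π '' P := by rw [hl] at hy; exact hy.1
      obtain ⟨x, hxP, rfl⟩ := hyP
      exact ⟨x, ⟨hy, hxP⟩, rfl⟩
  have himg : ∀ T : Set (Fin D → ℝ), π '' T = πₗ '' T := by
    intro T; ext y; simp only [Set.mem_image]
    constructor
    · rintro ⟨x, hx, rfl⟩; exact ⟨x, hx, (hπeq x).symm⟩
    · rintro ⟨x, hx, rfl⟩; exact ⟨x, hx, hπeq x⟩
  have hlow : ℓ - 1 ≤ Module.finrank ℝ (vectorSpan ℝ S) := by
    rw [← hF₀dim, ← hπS, himg S, vectorSpan_image]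
    exact Submodule.finrank_map_le πₗ (vectorSpan ℝ S)
  have hup : Module.finrank ℝ (vectorSpan ℝ S) ≤ ℓ - 1 := by
    by_contra hcon
    push_neg at hcon
    have hk : ℓ ≤ Module.finrank ℝ (vectorSpan ℝ S) := by omega
    have hdim_t : ℓ ≤ Module.finrank ℝ (vectorSpan ℝ ((amax s Lₗ : Finset (Fin D → ℝ)) : Set (Fin D → ℝ))) := by
      rwa [hShull, vectorSpan_hull] at hk
    have hamaxne : (amax s Lₗ).Nonempty := by
      obtain ⟨x, hx⟩ := hSne
      rw [hShull] at hx
      rcases (amax s Lₗ).eq_empty_or_nonempty with he | hne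
      · rw [he] at hx; simp at hx
      · exact hne
    obtain ⟨h', hne', hsub', hdim'⟩ := chain s ℓ (amax s Lₗ).card Lₗ hamaxne hdim_t le_rfl
    set F := convexHull ℝ ((amax s h' : Finset (Fin D → ℝ)) : Set (Fin D → ℝ)) with hF
    have hFexp : IsExposed ℝ P F := by
      rw [hPs]; exact isExposed_hull_amax s h'
    have hFne : F.Nonempty := by
      obtain ⟨v, hv⟩ := hne'
      exact ⟨v, subset_convexHull ℝ _ (Finset.mem_coe.2 hv)⟩
    have hFdim : Module.finrank ℝ (vectorSpan ℝ F) = ℓ := by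
      rw [hF, vectorSpan_hull]; exact hdim'
    have hres := hfaces F hFexp hFne hFdim
    have hFS : F ⊆ S := by
      rw [hF, hShull]
      exact convexHull_mono (by exact_mod_cast hsub')
    have hsub2 : π '' F ⊆ F₀ := hπS ▸ Set.image_mono (f := π) hFS
    have hle : Module.finrank ℝ (vectorSpan ℝ (π '' F)) ≤ Module.finrank ℝ (vectorSpan ℝ F₀) :=
      Submodule.finrank_mono (vectorSpan_mono ℝ hsub2)
    rw [hres, hF₀dim] at hle
    omega
  exact ⟨hexp, le_antisymm hup hlow⟩
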